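/- Let h:[0,η₀)→(0,∞) be C¹ with h(0)=1, h'<0 on (0,η₀), such that H(η):=η^{N-1}(h^m)'(η)+(α/N)η^N h(η) satisfies H'(η)=(β+α/N)η^N h'(η) for all η∈(0,η₀), with α,β>0, m>1, N≥1. If η₀=∞, then h reaches zero in finite time; i.e., the assumption that h(η)>0 and h'(η)<0 for all η>0 leads to a contradiction. -/

import Mathlib

theorem pme_profile_compact_support (m α β : ℝ) (N : ℕ)
    (hm : 1 < m) (hα : 0 < α) (hβ : 0 < β) (hN : 1 ≤ N)
    (h : ℝ → ℝ)
    (hreg : ContDiffOn ℝ 1 h (Set.Ici 0))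
    (h0 : h 0 = 1)
    (hpos : ∀ η > (0:ℝ), 0 < h η)
    (hdec : ∀ η > (0:ℝ), deriv h η < 0)
    (H : ℝ → ℝ)
    (hH : ∀ η, H η = η ^ ((N : ℝ) - 1) * deriv (fun s => h s ^ m) η + α / N * η ^ (N : ℝ) * h η)
    (hH' : ∀ η > (0:ℝ), deriv H η = (β + α / N) * η ^ (N : ℝ) * deriv h η) :
    False := by
  have hN1 : (1:ℝ) ≤ (N:ℝ) := by exact_mod_cast hN
  have hNpos : (0:ℝ) < (N:ℝ) := lt_of_lt_of_le one_pos hN1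
  have hαN : 0 < α / N := div_pos hα hNpos
  have hc : 0 < β + α / N := by positivity
  -- h is differentiable at positive points
  have hdiff : ∀ η > (0:ℝ), DifferentiableAt ℝ h η := by
    intro η hη
    exact (hreg.differentiableOn one_ne_zero η (le_of_lt hη)).differentiableAt
      (Ici_mem_nhds hη)
  have hcont : ContinuousOn h (Set.Ici 0) := hreg.continuousOn
  -- h is strictly decreasing on [0,∞), hence h < 1 on (0,∞)
  have hanti : StrictAntiOn h (Set.Ici 0) := by
    apply strictAntiOn_of_deriv_neg (convex_Ici 0) hcont
    intro x hx
    rw [interior_Ici] at hx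
    exact hdec x hx
  have hlt1 : ∀ η > (0:ℝ), h η < 1 := by
    intro η hη
    have := hanti (Set.mem_Ici.mpr le_rfl) (le_of_lt hη) hη
    rwa [h0] at this
  -- derivative of h^m
  have hDm : ∀ η > (0:ℝ), HasDerivAt (fun s => h s ^ m)
      (deriv h η * m * h η ^ (m - 1)) η := by
    intro η hη
    exact ((hdiff η hη).hasDerivAt).rpow_const (Or.inl (ne_of_gt (hpos η hη)))
  have hDmval : ∀ η > (0:ℝ), deriv (fun s => h s ^ m) η
      = deriv h η * m * h η ^ (m - 1) := fun η hη => (hDm η hη).deriv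
  have hDmneg : ∀ η > (0:ℝ), deriv (fun s => h s ^ m) η < 0 := by
    intro η hη
    rw [hDmval η hη]
    have h1 : 0 < h η ^ (m - 1) := Real.rpow_pos_of_pos (hpos η hη) _
    have h2 := hdec η hη
    exact mul_neg_of_neg_of_pos (mul_neg_of_neg_of_pos h2 (by linarith)) h1
  -- H is strictly decreasing on (0,∞)
  have hHderneg : ∀ η > (0:ℝ), deriv H η < 0 := by
    intro η hη
    rw [hH' η hη]
    have h1 : (0:ℝ) < η ^ (N:ℝ) := Real.rpow_pos_of_pos hη _
    exact mul_neg_of_pos_of_neg (mul_pos hc h1) (hdec η hη)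
  have hHdiff : ∀ η > (0:ℝ), DifferentiableAt ℝ H η := by
    intro η hη
    exact differentiableAt_of_deriv_ne_zero (ne_of_lt (hHderneg η hη))
  have hHanti : StrictAntiOn H (Set.Ioi 0) := by
    apply strictAntiOn_of_deriv_neg (convex_Ioi 0)
    · exact fun x hx => (hHdiff x hx).continuousAt.continuousWithinAt
    · intro x hx
      rw [interior_Ioi] at hx
      exact hHderneg x hx
  -- H ≤ 0 on (0,∞)
  have hHle : ∀ η > (0:ℝ), H η ≤ 0 := by
    intro η hη
    have htend : Filter.Tendsto (fun ε : ℝ => α / N * ε ^ N)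
        (nhdsWithin 0 (Set.Ioi 0)) (nhds 0) := by
      have : Filter.Tendsto (fun ε : ℝ => α / N * ε ^ N) (nhds 0)
          (nhds (α / N * (0:ℝ) ^ N)) := by
        exact (continuous_const.mul (continuous_pow N)).tendsto 0
      rw [zero_pow (by omega : N ≠ 0), mul_zero] at this
      exact this.mono_left nhdsWithin_le_nhds
    refine ge_of_tendsto htend ?_
    filter_upwards [Ioo_mem_nhdsGT hη] with ε hε
    have hε0 : (0:ℝ) < ε := hε.1
    have h1 : H η < H ε := hHanti hε0 hη hε.2
    have h2 : H ε ≤ α / N * ε ^ N := by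
      rw [hH ε]
      have ha : (0:ℝ) ≤ ε ^ ((N:ℝ) - 1) := le_of_lt (Real.rpow_pos_of_pos hε0 _)
      have hb : deriv (fun s => h s ^ m) ε < 0 := hDmneg ε hε0
      have hc1 : ε ^ (N:ℝ) = ε ^ N := Real.rpow_natCast ε N
      have hd : h ε < 1 := hlt1 ε hε0
      have he : (0:ℝ) < ε ^ N := pow_pos hε0 N
      rw [hc1]
      have t1 : ε ^ ((N:ℝ) - 1) * deriv (fun s => h s ^ m) ε ≤ 0 :=
        mul_nonpos_of_nonneg_of_nonpos ha hb.le
      have t2 : α / N * ε ^ N * h ε ≤ α / N * ε ^ N * 1 :=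
        mul_le_mul_of_nonneg_left (by linarith) (by positivity)
      linarith
    linarith
  -- key differential inequality: for η ≥ 1, deriv h η * m * h η ^ (m-1) ≤ -(α/N) * h η
  have hkey : ∀ η, 1 ≤ η → deriv h η * m * h η ^ (m - 1) ≤ -(α / N) * h η := by
    intro η hη1
    have hη : (0:ℝ) < η := lt_of_lt_of_le one_pos hη1
    have hHη := hHle η hη
    rw [hH η, hDmval η hη] at hHη
    have hA : (0:ℝ) < η ^ ((N:ℝ) - 1) := Real.rpow_pos_of_pos hη _
    have hsplit : η ^ (N:ℝ) = η ^ ((N:ℝ) - 1) * η := by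
      rw [← Real.rpow_add_one (ne_of_gt hη)]
      ring_nf
    rw [hsplit] at hHη
    -- from A*D + (α/N)*(A*η)*h ≤ 0 with A>0 conclude D ≤ -(α/N)*η*h
    have hD : deriv h η * m * h η ^ (m - 1) ≤ -(α / N) * η * h η := by
      have := mul_le_mul_of_nonneg_left (le_of_lt hA) (le_of_lt hA)
      nlinarith [mul_pos hA hη, hpos η hη]
    have : -(α / N) * η * h η ≤ -(α / N) * h η := by
      nlinarith [mul_nonneg (mul_nonneg hαN.le (sub_nonneg.mpr hη1)) (hpos η hη).le]
    linarith
  -- derivative of g = h^(m-1) is ≤ -c₁ on [1,∞)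
  set c₁ : ℝ := (m - 1) * α / (m * N) with hc₁def
  have hc₁ : 0 < c₁ := by
    apply div_pos
    · nlinarith
    · nlinarith
  set g : ℝ → ℝ := fun s => h s ^ (m - 1) with hgdef
  have hgD : ∀ η > (0:ℝ), HasDerivAt g (deriv h η * (m - 1) * h η ^ (m - 2)) η := by
    intro η hη
    have := ((hdiff η hη).hasDerivAt).rpow_const (p := m - 1)
      (Or.inl (ne_of_gt (hpos η hη)))
    have e : m - 1 - 1 = m - 2 := by ring
    rwa [e] at this
  have hgderle : ∀ η, 1 ≤ η → deriv g η ≤ -c₁ := by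
    intro η hη1
    have hη : (0:ℝ) < η := lt_of_lt_of_le one_pos hη1
    rw [(hgD η hη).deriv]
    have hk := hkey η hη1
    have hv : 0 < h η := hpos η hη
    have hP : 0 < h η ^ (m - 1) := Real.rpow_pos_of_pos hv _
    have hsplit : h η ^ (m - 1) = h η ^ (m - 2) * h η := by
      rw [← Real.rpow_add_one (ne_of_gt hv)]
      ring_nf
    rw [hsplit] at hk
    -- hk : u * m * (Q * v) ≤ -(α/N) * v  with Q = h η ^ (m-2), v = h η
    have hQ : 0 < h η ^ (m - 2) := Real.rpow_pos_of_pos hv _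
    have hk' : (deriv h η * m * h η ^ (m - 2)) * h η ≤ (-(α / N)) * h η := by
      rw [mul_assoc]; exact hk
    have h2 : deriv h η * m * h η ^ (m - 2) ≤ -(α / N) :=
      (mul_le_mul_iff_left₀ hv).mp hk'
    have hm0 : (0:ℝ) < m := by linarith
    have h3 : deriv h η * (m - 1) * h η ^ (m - 2)
        = (deriv h η * m * h η ^ (m - 2)) * ((m - 1) / m) := by
      field_simp
    rw [h3]
    have h4 : (deriv h η * m * h η ^ (m - 2)) * ((m - 1) / m)
        ≤ (-(α / N)) * ((m - 1) / m) :=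
      mul_le_mul_of_nonneg_right h2 (div_nonneg (by linarith) (by linarith))
    have h5 : (-(α / N)) * ((m - 1) / m) = -c₁ := by
      rw [hc₁def]; field_simp
    linarith
  -- φ = g + c₁ * id is antitone on [1,∞)
  set φ : ℝ → ℝ := fun s => g s + c₁ * s with hφdef
  have hφanti : AntitoneOn φ (Set.Ici 1) := by
    apply antitoneOn_of_deriv_nonpos (convex_Ici 1)
    · intro x hx
      have hx0 : (0:ℝ) < x := lt_of_lt_of_le one_pos hx
      exact (((hgD x hx0).add ((hasDerivAt_id x).const_mul c₁)).continuousAt).continuousWithinAt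
    · intro x hx
      rw [interior_Ici] at hx
      have hx0 : (0:ℝ) < x := lt_trans one_pos hx
      exact ((hgD x hx0).add ((hasDerivAt_id x).const_mul c₁)).differentiableAt.differentiableWithinAt
    · intro x hx
      rw [interior_Ici] at hx
      have hx0 : (0:ℝ) < x := lt_trans one_pos hx
      have : deriv φ x = deriv g x + c₁ := by
        have := ((hgD x hx0).add ((hasDerivAt_id x).const_mul c₁)).deriv
        rw [(hgD x hx0).deriv]
        rw [mul_one] at this
        exact this
      rw [this]
      have := hgderle x (le_of_lt hx)
      linarith
  -- conclusion: take η large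
  set R : ℝ := 1 + (g 1 + 1) / c₁ with hRdef
  have hg1 : 0 < g 1 := Real.rpow_pos_of_pos (hpos 1 one_pos) _
  have hR1 : (1:ℝ) ≤ R := by
    rw [hRdef]
    have : 0 < (g 1 + 1) / c₁ := by positivity
    linarith
  have := hφanti (Set.mem_Ici.mpr le_rfl) (by exact hR1) hR1
  -- φ R ≤ φ 1 : g R + c₁ R ≤ g 1 + c₁
  have hgR : 0 < g R := Real.rpow_pos_of_pos (hpos R (lt_of_lt_of_le one_pos hR1)) _
  have hRval : c₁ * R = c₁ + (g 1 + 1) := by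
    rw [hRdef]
    field_simp
  simp only [hφdef] at this
  rw [hRval] at this
  linarith
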